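/- Let Ω ⊆ ℝ^N be Lebesgue measurable and 1 < φ₁ < φ₂. Then for any r ∈ ℝ with r ≠ -N: M̄_{φ₁}^r(∞,Ω) ≤ M̄_{φ₂}^r(∞,Ω) ≤ (1 - φ₁^{(N+r)(⌊log_{φ₁} φ₂⌋ + 1)})/(1 - φ₁^{N+r}) · M̄_{φ₁}^r(∞,Ω). -/

import Mathlib

open MeasureTheory Filter Set
open scoped ENNReal NNReal Topology

noncomputable section

/-- The `[a,b)`-shell centered at the origin in `ℝ^N`. -/
def shell (N : ℕ) (a b : ℝ) : Set (EuclideanSpace ℝ (Fin N)) :=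
  {x | a ≤ ‖x‖ ∧ ‖x‖ < b}

/-- The complement of the open ball `B_t(0)` in `ℝ^N`. -/
def farBall (N : ℕ) (t : ℝ) : Set (EuclideanSpace ℝ (Fin N)) :=
  {x | t ≤ ‖x‖}

/-- Upper φ-shell Minkowski content of `Ω` at infinity. -/
def upperShellContent (N : ℕ) (Ω : Set (EuclideanSpace ℝ (Fin N))) (φ r : ℝ) : ℝ≥0∞ :=
  Filter.limsup (fun t : ℝ =>
    volume (shell N t (φ * t) ∩ Ω) / ENNReal.ofReal (t ^ ((N : ℝ) + r))) Filter.atTop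

/-- Lower φ-shell Minkowski content of `Ω` at infinity. -/
def lowerShellContent (N : ℕ) (Ω : Set (EuclideanSpace ℝ (Fin N))) (φ r : ℝ) : ℝ≥0∞ :=
  Filter.liminf (fun t : ℝ =>
    volume (shell N t (φ * t) ∩ Ω) / ENNReal.ofReal (t ^ ((N : ℝ) + r))) Filter.atTop

/-- Upper Minkowski content of `Ω` at infinity. -/
def upperContent (N : ℕ) (Ω : Set (EuclideanSpace ℝ (Fin N))) (r : ℝ) : ℝ≥0∞ :=
  Filter.limsup (fun t : ℝ =>
    volume (farBall N t ∩ Ω) / ENNReal.ofReal (t ^ ((N : ℝ) + r))) Filter.atTop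

/-- Lower Minkowski content of `Ω` at infinity. -/
def lowerContent (N : ℕ) (Ω : Set (EuclideanSpace ℝ (Fin N))) (r : ℝ) : ℝ≥0∞ :=
  Filter.liminf (fun t : ℝ =>
    volume (farBall N t ∩ Ω) / ENNReal.ofReal (t ^ ((N : ℝ) + r))) Filter.atTop

/-- Upper φ-shell Minkowski dimension of `Ω` at infinity, as an extended real. -/
def upperShellDim (N : ℕ) (Ω : Set (EuclideanSpace ℝ (Fin N))) (φ : ℝ) : EReal :=
  sInf ((fun r : ℝ => (r : EReal)) '' {r : ℝ | upperShellContent N Ω φ r = 0})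

/-- Lower φ-shell Minkowski dimension of `Ω` at infinity, as an extended real. -/
def lowerShellDim (N : ℕ) (Ω : Set (EuclideanSpace ℝ (Fin N))) (φ : ℝ) : EReal :=
  sInf ((fun r : ℝ => (r : EReal)) '' {r : ℝ | lowerShellContent N Ω φ r = 0})

lemma my_ennreal_limsup_add_le {α : Type*} {F : Filter α} (u v : α → ℝ≥0∞) :
    Filter.limsup (fun x => u x + v x) F ≤ Filter.limsup u F + Filter.limsup v F := by
  refine ENNReal.le_of_forall_pos_le_add fun ε hε hlt => ?_
  have hu : Filter.limsup u F ≠ ⊤ := (lt_of_le_of_lt le_self_add hlt).ne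
  have hv : Filter.limsup v F ≠ ⊤ := (lt_of_le_of_lt le_add_self hlt).ne
  have hε2 : ((ε : ℝ≥0∞) / 2) ≠ 0 := by
    simp [ENNReal.div_eq_zero_iff, hε.ne']
  have h1 : ∀ᶠ x in F, u x < Filter.limsup u F + (ε : ℝ≥0∞) / 2 :=
    Filter.eventually_lt_of_limsup_lt (ENNReal.lt_add_right hu hε2)
  have h2 : ∀ᶠ x in F, v x < Filter.limsup v F + (ε : ℝ≥0∞) / 2 :=
    Filter.eventually_lt_of_limsup_lt (ENNReal.lt_add_right hv hε2)
  refine Filter.limsup_le_of_le (by isBoundedDefault) ?_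
  filter_upwards [h1, h2] with x hx1 hx2
  calc u x + v x ≤ (Filter.limsup u F + (ε : ℝ≥0∞) / 2) + (Filter.limsup v F + (ε : ℝ≥0∞) / 2) :=
        add_le_add hx1.le hx2.le
    _ = Filter.limsup u F + Filter.limsup v F + ε := by
        rw [add_add_add_comm, ENNReal.add_halves]

lemma my_limsup_sum_le {α ι : Type*} {F : Filter α} (s : Finset ι) (f : ι → α → ℝ≥0∞) :
    Filter.limsup (fun t => ∑ n ∈ s, f n t) F ≤ ∑ n ∈ s, Filter.limsup (f n) F := by
  classical
  induction s using Finset.induction_on with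
  | empty =>
    simp only [Finset.sum_empty]
    exact Filter.limsup_le_of_le (by isBoundedDefault)
      (Filter.Eventually.of_forall fun _ => le_rfl)
  | insert _ _ ha ih =>
    rename_i a s
    simp only [Finset.sum_insert ha]
    exact (my_ennreal_limsup_add_le _ _).trans (add_le_add_right ih _)

lemma my_limsup_comp_le (G : ℝ → ℝ≥0∞) {c : ℝ} (hc : 0 < c) :
    Filter.limsup (fun t => G (c * t)) Filter.atTop ≤ Filter.limsup G Filter.atTop := by
  have hmap : Filter.map (fun t : ℝ => c * t) Filter.atTop ≤ Filter.atTop :=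
    Filter.Tendsto.const_mul_atTop hc Filter.tendsto_id
  have e : Filter.limsup (fun t => G (c * t)) Filter.atTop
      = Filter.limsup G (Filter.map (fun t : ℝ => c * t) Filter.atTop) := by
    simp only [Filter.limsup_eq, Filter.eventually_map]
  rw [e]
  exact Filter.limsup_le_limsup_of_le hmap

lemma my_shell_cover (N : ℕ) {φ : ℝ} (t : ℝ) (k : ℕ) :
    shell N t (φ ^ (k + 1) * t) ⊆
      ⋃ n ∈ Finset.range (k + 1), shell N (φ ^ n * t) (φ ^ (n + 1) * t) := by
  induction k with
  | zero =>
    intro y hy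
    exact Set.mem_biUnion (Finset.self_mem_range_succ 0)
      (by simpa [shell, Set.mem_setOf_eq] using hy)
  | succ k ih =>
    intro y hy
    by_cases h : ‖y‖ < φ ^ (k + 1) * t
    · have hmem := ih ⟨hy.1, h⟩
      simp only [Set.mem_iUnion, Finset.mem_range, exists_prop] at hmem ⊢
      obtain ⟨n, hn, h'⟩ := hmem
      exact ⟨n, by omega, h'⟩
    · exact Set.mem_biUnion (Finset.self_mem_range_succ (k + 1)) ⟨not_lt.1 h, hy.2⟩

theorem upper_shell_content_phi_comparison
    (N : ℕ) (Ω : Set (EuclideanSpace ℝ (Fin N))) (hΩ : MeasurableSet Ω)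
    (φ₁ φ₂ : ℝ) (hφ₁ : 1 < φ₁) (hφ₁₂ : φ₁ < φ₂) (r : ℝ) (hr : r ≠ -(N : ℝ)) :
    upperShellContent N Ω φ₁ r ≤ upperShellContent N Ω φ₂ r ∧
    upperShellContent N Ω φ₂ r ≤
      ENNReal.ofReal
        ((1 - φ₁ ^ (((N : ℝ) + r) * ((⌊Real.logb φ₁ φ₂⌋ : ℝ) + 1))) /
          (1 - φ₁ ^ ((N : ℝ) + r))) *
        upperShellContent N Ω φ₁ r := by
  have hφ₁0 : (0:ℝ) < φ₁ := lt_trans one_pos hφ₁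
  have hφ₂1 : (1:ℝ) < φ₂ := hφ₁.trans hφ₁₂
  have hφ₂0 : (0:ℝ) < φ₂ := lt_trans one_pos hφ₂1
  have ha : (N:ℝ) + r ≠ 0 := by
    intro h; apply hr; linarith
  set a : ℝ := (N:ℝ) + r with ha_def
  constructor
  · refine Filter.limsup_le_limsup ?_
    filter_upwards [eventually_ge_atTop (0:ℝ)] with t ht
    refine ENNReal.div_le_div_right (measure_mono (Set.inter_subset_inter_left Ω ?_)) _
    intro y hy
    exact ⟨hy.1, lt_of_lt_of_le hy.2 (mul_le_mul_of_nonneg_right hφ₁₂.le ht)⟩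
  · set x : ℝ := φ₁ ^ a with hx_def
    have hx0 : 0 < x := Real.rpow_pos_of_pos hφ₁0 a
    have hx1 : x ≠ 1 := by
      rcases ha.lt_or_gt with h | h
      · exact ne_of_lt (Real.rpow_lt_one_of_one_lt_of_neg hφ₁ h)
      · exact ne_of_gt ((Real.one_lt_rpow_iff_of_pos hφ₁0).mpr (Or.inl ⟨hφ₁, h⟩))
    set k : ℕ := (⌊Real.logb φ₁ φ₂⌋).toNat with hk_def
    have hfl : (0:ℤ) ≤ ⌊Real.logb φ₁ φ₂⌋ :=
      Int.floor_nonneg.mpr (Real.logb_nonneg hφ₁ hφ₂1.le)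
    have hkfloor : ((⌊Real.logb φ₁ φ₂⌋ : ℤ) : ℝ) = (k : ℝ) := by
      rw [hk_def]; exact_mod_cast (Int.toNat_of_nonneg hfl).symm
    have hφ₂lt : φ₂ < φ₁ ^ (k + 1) := by
      have h0 := Int.lt_floor_add_one (Real.logb φ₁ φ₂)
      rw [hkfloor] at h0
      calc φ₂ = φ₁ ^ Real.logb φ₁ φ₂ := (Real.rpow_logb hφ₁0 hφ₁.ne' hφ₂0).symm
        _ < φ₁ ^ ((k:ℝ) + 1) := (Real.rpow_lt_rpow_left_iff hφ₁).mpr h0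
        _ = φ₁ ^ (k + 1) := by
            rw [show ((k:ℝ) + 1) = ((k + 1 : ℕ) : ℝ) by push_cast; ring, Real.rpow_natCast]
    have hterm : ∀ (n : ℕ) (t : ℝ), 0 < t →
        volume (shell N (φ₁ ^ n * t) (φ₁ ^ (n + 1) * t) ∩ Ω) / ENNReal.ofReal (t ^ a)
          = ENNReal.ofReal (x ^ n) *
            (volume (shell N (φ₁ ^ n * t) (φ₁ * (φ₁ ^ n * t)) ∩ Ω) /
              ENNReal.ofReal ((φ₁ ^ n * t) ^ a)) := by
      intro n t ht
      have h1 : φ₁ ^ (n + 1) * t = φ₁ * (φ₁ ^ n * t) := by ring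
      have h2 : (φ₁ ^ n * t) ^ a = x ^ n * t ^ a := by
        rw [Real.mul_rpow (by positivity) ht.le]
        congr 1
        rw [hx_def, ← Real.rpow_natCast φ₁ n, ← Real.rpow_mul hφ₁0.le, mul_comm,
          Real.rpow_mul hφ₁0.le, Real.rpow_natCast]
      rw [h1, h2, ENNReal.ofReal_mul (by positivity), ← mul_div_assoc]
      exact (ENNReal.mul_div_mul_left _ _
        (ENNReal.ofReal_pos.mpr (pow_pos hx0 n)).ne' ENNReal.ofReal_ne_top).symm
    have hbound : ∀ᶠ t in atTop,
        volume (shell N t (φ₂ * t) ∩ Ω) / ENNReal.ofReal (t ^ a) ≤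
          ∑ n ∈ Finset.range (k + 1), ENNReal.ofReal (x ^ n) *
            (volume (shell N (φ₁ ^ n * t) (φ₁ * (φ₁ ^ n * t)) ∩ Ω) /
              ENNReal.ofReal ((φ₁ ^ n * t) ^ a)) := by
      filter_upwards [eventually_gt_atTop (0:ℝ)] with t ht
      have hsub : shell N t (φ₂ * t) ⊆
          ⋃ n ∈ Finset.range (k + 1), shell N (φ₁ ^ n * t) (φ₁ ^ (n + 1) * t) := by
        intro y hy
        exact my_shell_cover N t k
          ⟨hy.1, lt_of_lt_of_le hy.2 (mul_le_mul_of_nonneg_right hφ₂lt.le ht.le)⟩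
      have hmeas : volume (shell N t (φ₂ * t) ∩ Ω) ≤
          ∑ n ∈ Finset.range (k + 1),
            volume (shell N (φ₁ ^ n * t) (φ₁ ^ (n + 1) * t) ∩ Ω) := by
        calc volume (shell N t (φ₂ * t) ∩ Ω)
            ≤ volume (⋃ n ∈ Finset.range (k + 1),
                shell N (φ₁ ^ n * t) (φ₁ ^ (n + 1) * t) ∩ Ω) :=
              measure_mono ((Set.inter_subset_inter_left Ω hsub).trans
                (Set.iUnion₂_inter _ _).subset)
          _ ≤ _ := measure_biUnion_finset_le _ _
      calc volume (shell N t (φ₂ * t) ∩ Ω) / ENNReal.ofReal (t ^ a)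
          ≤ (∑ n ∈ Finset.range (k + 1),
              volume (shell N (φ₁ ^ n * t) (φ₁ ^ (n + 1) * t) ∩ Ω)) /
              ENNReal.ofReal (t ^ a) := ENNReal.div_le_div_right hmeas _
        _ = ∑ n ∈ Finset.range (k + 1),
              volume (shell N (φ₁ ^ n * t) (φ₁ ^ (n + 1) * t) ∩ Ω) /
              ENNReal.ofReal (t ^ a) := by
            simp only [div_eq_mul_inv, Finset.sum_mul]
        _ = _ := Finset.sum_congr rfl fun n _ => hterm n t ht
    have hM : upperShellContent N Ω φ₁ r =
        Filter.limsup (fun s : ℝ =>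
          volume (shell N s (φ₁ * s) ∩ Ω) / ENNReal.ofReal (s ^ a)) atTop := rfl
    calc upperShellContent N Ω φ₂ r
        ≤ Filter.limsup (fun t => ∑ n ∈ Finset.range (k + 1), ENNReal.ofReal (x ^ n) *
            (volume (shell N (φ₁ ^ n * t) (φ₁ * (φ₁ ^ n * t)) ∩ Ω) /
              ENNReal.ofReal ((φ₁ ^ n * t) ^ a))) atTop :=
          Filter.limsup_le_limsup hbound
      _ ≤ ∑ n ∈ Finset.range (k + 1), Filter.limsup (fun t => ENNReal.ofReal (x ^ n) *
            (volume (shell N (φ₁ ^ n * t) (φ₁ * (φ₁ ^ n * t)) ∩ Ω) /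
              ENNReal.ofReal ((φ₁ ^ n * t) ^ a))) atTop := my_limsup_sum_le _ _
      _ ≤ ∑ n ∈ Finset.range (k + 1), ENNReal.ofReal (x ^ n) * upperShellContent N Ω φ₁ r := by
          refine Finset.sum_le_sum fun n _ => ?_
          rw [ENNReal.limsup_const_mul_of_ne_top ENNReal.ofReal_ne_top]
          refine mul_le_mul_right ?_ _
          rw [hM]
          exact my_limsup_comp_le
            (fun s => volume (shell N s (φ₁ * s) ∩ Ω) / ENNReal.ofReal (s ^ a))
            (pow_pos hφ₁0 n)
      _ = ENNReal.ofReal (∑ n ∈ Finset.range (k + 1), x ^ n) * upperShellContent N Ω φ₁ r := by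
          rw [← Finset.sum_mul, ← ENNReal.ofReal_sum_of_nonneg fun n _ => (pow_pos hx0 n).le]
      _ = _ := by
          congr 1
          congr 1
          have hxk : φ₁ ^ (a * (((⌊Real.logb φ₁ φ₂⌋ : ℤ) : ℝ) + 1)) = x ^ (k + 1) := by
            rw [hkfloor, show a * ((k:ℝ) + 1) = a * ((k + 1 : ℕ) : ℝ) by push_cast; ring,
              Real.rpow_mul hφ₁0.le, Real.rpow_natCast]
          rw [geom_sum_eq hx1, hxk,
            show (1 - x ^ (k + 1)) = -(x ^ (k + 1) - 1) by ring,
            show (1 - x) = -(x - 1) by ring, neg_div_neg_eq]
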